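/- arXiv:1101.3088 — 2 statements merged into one kernel-verified Lean document; each statement's English description precedes it below -/
import Mathlib

section
/- Let N be an admissible algebra, π an admissible projection, and S = S_π = {x ∈ N : π(exp₁ x) = 0}. If a ∈ N satisfies S + a = S, then a = 0. (Equivalently, S is invariant under no non-trivial translation.) -/
/-- `pw F N k` is the characteristic ideal `N^k`. -/
def pw (F N : Type*) [Field F] [NonUnitalNonAssocRing N] [Module F N] : ℕ → Submodule F N
  | 0 => ⊤
  | 1 => ⊤
  | (k+2) => Submodule.span F {z : N | ∃ x : N, ∃ y ∈ pw F N (k+1), z = x * y}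

/-- The annihilator `Ann(N) = {x | x·N = 0}` of a commutative algebra `N`. -/
def annSub (F N : Type*) [Field F] [NonUnitalCommRing N] [Module F N]
    [SMulCommClass F N N] [IsScalarTower F N N] : Submodule F N where
  carrier := {x | ∀ y : N, x * y = 0}
  add_mem' := by intro a b ha hb y; simp [add_mul, ha y, hb y]
  zero_mem' := by intro y; simp
  smul_mem' := by intro c x hx y; rw [smul_mul_assoc, hx y, smul_zero]

/-- `npw x k = x^(k+1)` in a non-unital ring. -/
def npw {N : Type*} [Mul N] (x : N) : ℕ → N
  | 0 => x
  | (k+1) => x * npw x k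

/-- The truncated exponential `exp₁ x = Σ_{k=1}^{m} x^k/k!`. -/
noncomputable def exp1 (F : Type*) {N : Type*} [Field F] [NonUnitalNonAssocRing N]
    [Module F N] (m : ℕ) (x : N) : N :=
  ∑ k ∈ Finset.range m, ((Nat.factorial (k + 1) : F))⁻¹ • npw x k

set_option linter.unusedSectionVars false
set_option linter.unusedVariables false
set_option maxHeartbeats 800000

section helpers
variable {F N : Type*} [Field F] [NonUnitalCommRing N] [Module F N]
  [SMulCommClass F N N] [IsScalarTower F N N]

lemma st9_pw_zero : pw F N 0 = ⊤ := rfl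
lemma st9_pw_one : pw F N 1 = ⊤ := rfl

lemma st9_mem_ann {x : N} : x ∈ annSub F N ↔ ∀ y : N, x * y = 0 := Iff.rfl

lemma st9_mul_mem (x : N) {k : ℕ} {y : N} (hy : y ∈ pw F N (k+1)) :
    x * y ∈ pw F N (k+2) :=
  Submodule.subset_span ⟨x, y, hy, rfl⟩

lemma st9_pw_succ_le : ∀ k : ℕ, pw F N (k+1) ≤ pw F N k
  | 0 => le_top
  | (k+1) => by
      rw [show pw F N (k+2) = Submodule.span F {z : N | ∃ x : N, ∃ y ∈ pw F N (k+1), z = x * y} from rfl]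
      apply Submodule.span_le.mpr
      rintro z ⟨x, y, hy, rfl⟩
      cases k with
      | zero => exact Submodule.mem_top
      | succ k => exact st9_mul_mem x (st9_pw_succ_le (k+1) hy)

lemma st9_pw_le {k l : ℕ} (h : k ≤ l) : pw F N l ≤ pw F N k := by
  induction h with
  | refl => exact le_rfl
  | step h ih => exact le_trans (st9_pw_succ_le _) ih

lemma st9_npw_mem (x : N) : ∀ k : ℕ, npw x k ∈ pw F N (k+1)
  | 0 => Submodule.mem_top
  | (k+1) => st9_mul_mem x (st9_npw_mem x k)

lemma st9_npw_npw (x y : N) : ∀ i j : ℕ, npw x i * npw y j ∈ pw F N (i+j+2)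
  | 0, j => by
      have h := st9_mul_mem x (st9_npw_mem (F := F) y j)
      simpa [Nat.zero_add, npw] using h
  | (i+1), j => by
      have h1 : npw x (i+1) * npw y j = x * (npw x i * npw y j) := by
        rw [npw, mul_assoc]
      have h := st9_mul_mem x (st9_npw_npw x y i j)
      rw [h1]
      have he : i + 1 + j + 2 = (i + j + 2) + 1 := by omega
      rw [he]
      exact h

lemma st9_npw_zero : ∀ k : ℕ, npw (0:N) k = 0
  | 0 => rfl
  | (k+1) => by rw [npw, zero_mul]

end helpers

section unit
variable {F N : Type*} [Field F] [NonUnitalCommRing N] [Module F N]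
  [SMulCommClass F N N] [IsScalarTower F N N]

noncomputable def st9g (F : Type*) {N : Type*} [Field F] [NonUnitalCommRing N] [Module F N]
    [SMulCommClass F N N] [IsScalarTower F N N] (ν : ℕ) (z : Unitization F N) :
    Unitization F N :=
  ∑ k ∈ Finset.range (ν+1), ((Nat.factorial k : F))⁻¹ • z ^ k

lemma st9_coe_npw (x : N) : ∀ k : ℕ, ((npw x k : N) : Unitization F N) = (x : Unitization F N) ^ (k+1)
  | 0 => by simp [npw]
  | (k+1) => by
      rw [npw, Unitization.inr_mul, st9_coe_npw x k, mul_comm, ← pow_succ]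

lemma st9_coe_exp1 (ν : ℕ) (x : N) :
    ((exp1 F ν x : N) : Unitization F N) = st9g F ν x - 1 := by
  rw [st9g, Finset.sum_range_succ']
  simp only [pow_zero, Nat.factorial_zero, Nat.cast_one, inv_one, one_smul]
  rw [add_sub_cancel_right, exp1, ← Unitization.inrHom_apply F F N, map_sum]
  refine Finset.sum_congr rfl fun k _ => ?_
  rw [map_smul, Unitization.inrHom_apply, st9_coe_npw]

lemma st9_tri {M : Type*} [AddCommMonoid M] (f : ℕ → ℕ → M) : ∀ n : ℕ,
    ∑ m ∈ Finset.range n, ∑ i ∈ Finset.range (m+1), f i (m-i)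
      = ∑ i ∈ Finset.range n, ∑ j ∈ Finset.range (n-i), f i j
  | 0 => by simp
  | (n+1) => by
      have h1 : ∀ i ∈ Finset.range (n+1),
          ∑ j ∈ Finset.range (n+1-i), f i j
            = ∑ j ∈ Finset.range (n-i), f i j + f i (n-i) := by
        intro i hi
        rw [Finset.mem_range] at hi
        rw [show n+1-i = (n-i)+1 by omega, Finset.sum_range_succ]
      have h2 : ∑ i ∈ Finset.range (n+1), ∑ j ∈ Finset.range (n-i), f i j
          = ∑ i ∈ Finset.range n, ∑ j ∈ Finset.range (n-i), f i j := by
        rw [Finset.sum_range_succ, Nat.sub_self, Finset.sum_range_zero, add_zero]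
      calc ∑ m ∈ Finset.range (n+1), ∑ i ∈ Finset.range (m+1), f i (m-i)
          = (∑ m ∈ Finset.range n, ∑ i ∈ Finset.range (m+1), f i (m-i))
              + ∑ i ∈ Finset.range (n+1), f i (n-i) := Finset.sum_range_succ _ n
        _ = (∑ i ∈ Finset.range (n+1), ∑ j ∈ Finset.range (n-i), f i j)
              + ∑ i ∈ Finset.range (n+1), f i (n-i) := by rw [st9_tri f n, h2]
        _ = ∑ i ∈ Finset.range (n+1), (∑ j ∈ Finset.range (n-i), f i j + f i (n-i)) :=
              Finset.sum_add_distrib.symm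
        _ = ∑ i ∈ Finset.range (n+1), ∑ j ∈ Finset.range (n+1-i), f i j :=
              (Finset.sum_congr rfl h1).symm

lemma st9_coeff {F : Type*} [Field F] [CharZero F] {m i : ℕ} (h : i ≤ m) :
    ((m.factorial : F))⁻¹ * (m.choose i : F)
      = ((i.factorial : F))⁻¹ * (((m-i).factorial : F))⁻¹ := by
  rw [Nat.cast_choose F h]
  have h1 : (i.factorial : F) ≠ 0 := Nat.cast_ne_zero.mpr i.factorial_ne_zero
  have h2 : ((m-i).factorial : F) ≠ 0 := Nat.cast_ne_zero.mpr (m-i).factorial_ne_zero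
  have h3 : (m.factorial : F) ≠ 0 := Nat.cast_ne_zero.mpr m.factorial_ne_zero
  field_simp

lemma st9_vanish {ν : ℕ} (hnil : pw F N (ν + 1) = ⊥) (x y : N) {i j : ℕ}
    (hi : i ≤ ν) (hj : j ≤ ν) (hij : ν + 1 ≤ i + j) :
    (x : Unitization F N) ^ i * (y : Unitization F N) ^ j = 0 := by
  have hi1 : 1 ≤ i := by omega
  have hj1 : 1 ≤ j := by omega
  obtain ⟨i', rfl⟩ : ∃ i', i = i' + 1 := ⟨i - 1, by omega⟩
  obtain ⟨j', rfl⟩ : ∃ j', j = j' + 1 := ⟨j - 1, by omega⟩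
  rw [← st9_coe_npw, ← st9_coe_npw, ← Unitization.inr_mul]
  have hm : npw x i' * npw y j' ∈ pw F N (i'+j'+2) := st9_npw_npw x y i' j'
  have hz : npw x i' * npw y j' = 0 := by
    have := st9_pw_le (F := F) (N := N) (show ν + 1 ≤ i'+j'+2 by omega) hm
    rw [hnil] at this
    simpa using this
  rw [hz, Unitization.inr_zero]

lemma st9_g_add {F N : Type*} [Field F] [CharZero F] [NonUnitalCommRing N] [Module F N]
    [SMulCommClass F N N] [IsScalarTower F N N]
    {ν : ℕ} (hnil : pw F N (ν + 1) = ⊥) (x y : N) :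
    st9g F ν ((x : Unitization F N) + (y : Unitization F N))
      = st9g F ν (x : Unitization F N) * st9g F ν (y : Unitization F N) := by
  set u := (x : Unitization F N)
  set v := (y : Unitization F N)
  set c : ℕ → F := fun k => ((k.factorial : F))⁻¹ with hc
  -- RHS
  have hR : st9g F ν u * st9g F ν v
      = ∑ i ∈ Finset.range (ν+1), ∑ j ∈ Finset.range (ν+1), (c i * c j) • (u^i * v^j) := by
    rw [st9g, st9g, Finset.sum_mul_sum]
    refine Finset.sum_congr rfl fun i _ => Finset.sum_congr rfl fun j _ => ?_
    rw [smul_mul_smul_comm]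
  have hzero : ∀ i ∈ Finset.range (ν+1), ∀ j, j ∈ Finset.range (ν+1) → j ∉ Finset.range (ν+1-i)
      → (c i * c j) • (u^i * v^j) = 0 := by
    intro i hi j hj hj'
    rw [Finset.mem_range] at hi hj
    rw [Finset.mem_range] at hj'
    rw [st9_vanish hnil x y (by omega) (by omega) (by omega), smul_zero]
  have hR2 : st9g F ν u * st9g F ν v
      = ∑ i ∈ Finset.range (ν+1), ∑ j ∈ Finset.range (ν+1-i), (c i * c j) • (u^i * v^j) := by
    rw [hR]
    refine Finset.sum_congr rfl fun i hi => ?_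
    refine (Finset.sum_subset (Finset.range_subset_range.mpr (by omega)) ?_).symm
    intro j hj hj'
    exact hzero i hi j hj hj'
  -- LHS
  have hL : st9g F ν (u + v)
      = ∑ m ∈ Finset.range (ν+1), ∑ i ∈ Finset.range (m+1), (c i * c (m-i)) • (u^i * v^(m-i)) := by
    rw [st9g]
    refine Finset.sum_congr rfl fun m hm => ?_
    rw [add_pow, Finset.smul_sum]
    refine Finset.sum_congr rfl fun i hi => ?_
    rw [Finset.mem_range] at hi
    have hcast : (m.choose i : Unitization F N) = ((m.choose i : F)) • (1 : Unitization F N) := by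
      rw [← Algebra.algebraMap_eq_smul_one, map_natCast]
    rw [hcast, mul_smul_comm, mul_one, smul_smul, hc]
    rw [show ((m.factorial : F))⁻¹ * (m.choose i : F) = ((i.factorial : F))⁻¹ * (((m-i).factorial : F))⁻¹ from st9_coeff (by omega)]
  rw [hL, hR2, st9_tri (fun i j => (c i * c j) • (u^i * v^j)) (ν+1)]

lemma st9_exp1_add {F N : Type*} [Field F] [CharZero F] [NonUnitalCommRing N] [Module F N]
    [SMulCommClass F N N] [IsScalarTower F N N]
    {ν : ℕ} (hnil : pw F N (ν + 1) = ⊥) (x y : N) :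
    exp1 F ν (x + y) = exp1 F ν x + exp1 F ν y + exp1 F ν x * exp1 F ν y := by
  apply Unitization.inr_injective (R := F)
  have h1 := st9_coe_exp1 (F := F) ν (x + y)
  have h2 := st9_coe_exp1 (F := F) ν x
  have h3 := st9_coe_exp1 (F := F) ν y
  rw [Unitization.inr_add] at h1
  rw [Unitization.inr_add, Unitization.inr_add, Unitization.inr_mul, h1, h2, h3,
    st9_g_add hnil x y]
  ring

end unit

section anal
variable {F N : Type*} [Field F] [CharZero F] [NonUnitalCommRing N] [Module F N]
  [SMulCommClass F N N] [IsScalarTower F N N]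

lemma st9_npw_diff {m : ℕ} (hm : 1 ≤ m) {h : N} (hh : h ∈ pw F N m) (x : N) :
    ∀ j : ℕ, npw (x+h) (j+1) - npw x (j+1) ∈ pw F N (m+1) := by
  obtain ⟨m', rfl⟩ : ∃ m', m = m' + 1 := ⟨m - 1, by omega⟩
  intro j
  induction j with
  | zero =>
      have e : npw (x+h) 1 - npw x 1 = x * h + (h * x + h * h) := by
        show (x+h) * npw (x+h) 0 - x * npw x 0 = _
        show (x+h) * (x+h) - x * x = _
        rw [add_mul, mul_add, mul_add]; abel
      rw [e]
      exact add_mem (st9_mul_mem x hh)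
        (add_mem (by rw [mul_comm]; exact st9_mul_mem x hh) (st9_mul_mem h hh))
  | succ j ih =>
      have e : npw (x+h) (j+1+1) - npw x (j+1+1)
          = x * (npw (x+h) (j+1) - npw x (j+1)) + npw (x+h) (j+1) * h := by
        show (x+h) * npw (x+h) (j+1) - x * npw x (j+1) = _
        rw [add_mul, mul_sub, mul_comm h]; abel
      rw [e]
      refine add_mem ?_ (st9_mul_mem _ hh)
      exact st9_pw_succ_le _ (st9_mul_mem x ih)

lemma st9_first_term (x : N) : ((Nat.factorial (0+1) : F))⁻¹ • npw x 0 = x := by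
  norm_num [npw]

lemma st9_exp1_sub_self_mem {ν : ℕ} (hν : 1 ≤ ν) (x : N) :
    exp1 F ν x - x ∈ pw F N 2 := by
  obtain ⟨n, rfl⟩ : ∃ n, ν = n + 1 := ⟨ν - 1, by omega⟩
  rw [exp1, Finset.sum_range_succ', st9_first_term, add_sub_cancel_right]
  refine Submodule.sum_mem _ fun k _ => Submodule.smul_mem _ _ ?_
  exact st9_pw_le (by omega) (st9_npw_mem x (k+1))

lemma st9_perturb {ν m : ℕ} (hν : 1 ≤ ν) (hm : 1 ≤ m) {h : N} (hh : h ∈ pw F N m) (x : N) :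
    exp1 F ν (x + h) - exp1 F ν x - h ∈ pw F N (m+1) := by
  obtain ⟨n, rfl⟩ : ∃ n, ν = n + 1 := ⟨ν - 1, by omega⟩
  rw [exp1, exp1, Finset.sum_range_succ', Finset.sum_range_succ' _ n,
    st9_first_term, st9_first_term]
  have key : ∀ A B : N, A + (x + h) - (B + x) - h = A - B := by intro A B; abel
  rw [key, ← Finset.sum_sub_distrib]
  refine Submodule.sum_mem _ fun k _ => ?_
  rw [← smul_sub]
  exact Submodule.smul_mem _ _ (st9_npw_diff hm hh x k)

lemma st9_surj {ν : ℕ} (hnil : pw F N (ν + 1) = ⊥) (hν : 1 ≤ ν) (y : N) :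
    ∃ x : N, exp1 F ν x = y := by
  have claim : ∀ k : ℕ, ∃ x : N, exp1 F ν x - y ∈ pw F N (k+2) := by
    intro k
    induction k with
    | zero => exact ⟨y, st9_exp1_sub_self_mem hν y⟩
    | succ k ih =>
        obtain ⟨x, hx⟩ := ih
        refine ⟨x + (y - exp1 F ν x), ?_⟩
        have hx' : y - exp1 F ν x ∈ pw F N (k+2) := by
          have := Submodule.neg_mem _ hx
          simpa [neg_sub] using this
        have h1 := st9_perturb (m := k+2) hν (by omega) hx' x
        have h2 : exp1 F ν (x + (y - exp1 F ν x)) - exp1 F ν x - (y - exp1 F ν x)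
            = exp1 F ν (x + (y - exp1 F ν x)) - y := by abel
        rw [h2] at h1
        exact st9_pw_le (by omega) h1
  obtain ⟨n, rfl⟩ : ∃ n, ν = n + 1 := ⟨ν - 1, by omega⟩
  obtain ⟨x, hx⟩ := claim n
  rw [hnil] at hx
  exact ⟨x, by rwa [Submodule.mem_bot, sub_eq_zero] at hx⟩

lemma st9_inj0 {ν : ℕ} (hnil : pw F N (ν + 1) = ⊥) (hν : 1 ≤ ν) {a : N}
    (hE : exp1 F ν a = 0) : a = 0 := by
  obtain ⟨n, rfl⟩ : ∃ n, ν = n + 1 := ⟨ν - 1, by omega⟩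
  have hEa : a = -∑ i ∈ Finset.range n, ((Nat.factorial (i+1+1) : F))⁻¹ • npw a (i+1) := by
    have h0 := hE
    rw [exp1, Finset.sum_range_succ', st9_first_term] at h0
    exact eq_neg_of_add_eq_zero_right h0
  have claim : ∀ m : ℕ, a ∈ pw F N (m+1) := by
    intro m
    induction m with
    | zero => exact Submodule.mem_top
    | succ m ih =>
        rw [hEa]
        refine Submodule.neg_mem _ (Submodule.sum_mem _ fun i _ => Submodule.smul_mem _ _ ?_)
        rw [show npw a (i+1) = npw a i * a from by rw [npw, mul_comm]]
        exact st9_mul_mem (npw a i) ih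
  have hb := claim (n+1)
  rw [hnil] at hb
  exact (Submodule.mem_bot F).mp hb

end anal

section descent
variable {F N : Type*} [Field F] [NonUnitalCommRing N] [Module F N]
  [SMulCommClass F N N] [IsScalarTower F N N]

lemma st9_pw_le_one (k : ℕ) (hk : k ≤ 1) : pw F N k = ⊤ := by
  interval_cases k
  · rfl
  · rfl

lemma st9_descent {ν : ℕ} (hnil : pw F N (ν + 1) = ⊥) :
    ∀ k : ℕ, ∀ b : N, b ≠ 0 → b ∈ pw F N (ν + 1 - k) →
      ∃ z : N, (∀ w : N, z * w = 0) ∧ z ≠ 0 ∧ (z = b ∨ ∃ w : N, z = w * b) := by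
  intro k
  induction k with
  | zero =>
      intro b hb hmem
      rw [Nat.sub_zero, hnil, Submodule.mem_bot] at hmem
      exact absurd hmem hb
  | succ k ih =>
      intro b hb hmem
      by_cases hann : ∀ w : N, b * w = 0
      · exact ⟨b, hann, hb, Or.inl rfl⟩
      · push_neg at hann
        obtain ⟨y, hy⟩ := hann
        have hb' : y * b ≠ 0 := by rwa [mul_comm] at hy
        have hmem' : y * b ∈ pw F N (ν + 1 - k) := by
          by_cases hsmall : ν + 1 - k ≤ 1
          · rw [st9_pw_le_one _ hsmall]; exact Submodule.mem_top
          · obtain ⟨t, ht⟩ : ∃ t, ν + 1 - k = t + 2 := ⟨ν - 1 - k, by omega⟩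
            have hb2 : b ∈ pw F N (t + 1) := by
              have : ν + 1 - (k + 1) = t + 1 := by omega
              rwa [this] at hmem
            rw [ht]
            exact st9_mul_mem y hb2
        obtain ⟨z, hz1, hz2, hz3⟩ := ih (y * b) hb' hmem'
        refine ⟨z, hz1, hz2, Or.inr ?_⟩
        rcases hz3 with h | ⟨w, hw⟩
        · exact ⟨y, h⟩
        · exact ⟨w * y, by rw [hw, mul_assoc]⟩

end descent

/-- Let `N` be an admissible algebra (finite-dimensional commutative nilpotent,
`dim Ann(N) = 1`), `π` an admissible projection and `S = S_π = {x | π(exp₁ x) = 0}`.  If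
`a ∈ N` satisfies `S + a = S` then `a = 0`. -/
theorem stmt9 {F N : Type*} [Field F] [CharZero F] [NonUnitalCommRing N] [Module F N]
    [SMulCommClass F N N] [IsScalarTower F N N] [FiniteDimensional F N]
    (hAnn : Module.finrank F (annSub F N) = 1)
    (ν : ℕ) (hnil : pw F N (ν + 1) = ⊥)
    (π : N →ₗ[F] N) (hproj : π ∘ₗ π = π) (hrange : LinearMap.range π = annSub F N)
    (a : N) (ha : ∀ x : N, π (exp1 F ν x) = 0 ↔ π (exp1 F ν (x + a)) = 0) :
    a = 0 := by
  -- trivial case ν = 0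
  rcases Nat.eq_zero_or_pos ν with hν0 | hν
  · subst hν0
    have : a ∈ pw F N 1 := Submodule.mem_top
    rw [show (1 : ℕ) = 0 + 1 from rfl, hnil, Submodule.mem_bot] at this
    exact this
  -- projection facts
  have hππ : ∀ c : N, π (π c) = π c := fun c => DFunLike.congr_fun hproj c
  have hannfix : ∀ z : N, z ∈ annSub F N → π z = z := by
    intro z hz
    rw [← hrange] at hz
    obtain ⟨c, rfl⟩ := hz
    exact hππ c
  -- 0 ∈ S, hence exp1 a ∈ ker π
  have hE0 : exp1 F ν (0 : N) = 0 := by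
    rw [exp1]
    refine Finset.sum_eq_zero fun k _ => ?_
    rw [st9_npw_zero, smul_zero]
  set b := exp1 F ν a with hbdef
  have hπb : π b = 0 := by
    have := (ha 0).mp (by rw [hE0, map_zero])
    rwa [zero_add] at this
  -- π (w * b) = 0 for every w
  have hker : ∀ y : N, π y = 0 → π (y * b) = 0 := by
    intro y hy
    obtain ⟨x, rfl⟩ := st9_surj hnil hν y
    have h1 := (ha x).mp hy
    rw [st9_exp1_add hnil x a, map_add, map_add, hy, hπb, ← hbdef, zero_add, zero_add] at h1
    exact h1
  have hall : ∀ w : N, π (w * b) = 0 := by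
    intro w
    have hsplit : w * b = (w - π w) * b + (π w) * b := by rw [sub_mul]; abel
    have hπw : π (w - π w) = 0 := by rw [map_sub, hππ, sub_self]
    have hannw : (π w) * b = 0 := by
      have : π w ∈ annSub F N := hrange ▸ LinearMap.mem_range_self π w
      exact this b
    rw [hsplit, map_add, hker _ hπw, hannw, map_zero, add_zero]
  -- b = 0 by the descent argument
  have hb : b = 0 := by
    by_contra hb
    obtain ⟨z, hz1, hz2, hz3⟩ := st9_descent hnil (ν + 1) b hb
      (by rw [Nat.sub_self]; exact Submodule.mem_top)
    have hzfix : π z = z := hannfix z hz1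
    rcases hz3 with rfl | ⟨w, rfl⟩
    · exact hz2 (by rw [← hzfix, hπb])
    · exact hz2 (by rw [← hzfix, hall w])
  exact st9_inj0 hnil hν hb
end

section
/- Let N, Ñ be admissible algebras with admissible projections π, π̃ and associated hypersurfaces S = S_π, S̃ = S_{π̃}. If L : N → Ñ is an algebra isomorphism, then there exists c ∈ S such that S̃ = L(S − c). -/
set_option linter.unusedSectionVars false

section PW
variable {F N : Type*} [Field F] [NonUnitalCommRing N] [Module F N]
  [SMulCommClass F N N] [IsScalarTower F N N]

lemma pw_succ_le : ∀ k, pw F N (k+1) ≤ pw F N k := by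
  intro k
  induction k with
  | zero => simp [pw]
  | succ k ih =>
    cases k with
    | zero =>
      show pw F N 2 ≤ pw F N 1
      simp [pw]
    | succ k =>
      show pw F N (k+3) ≤ pw F N (k+2)
      rw [show pw F N (k+3) = Submodule.span F {z : N | ∃ x : N, ∃ y ∈ pw F N (k+2), z = x * y} from rfl,
        show pw F N (k+2) = Submodule.span F {z : N | ∃ x : N, ∃ y ∈ pw F N (k+1), z = x * y} from rfl]
      apply Submodule.span_mono
      rintro z ⟨x, y, hy, rfl⟩
      exact ⟨x, y, ih hy, rfl⟩

lemma pw_le_of_le {j k : ℕ} (h : j ≤ k) : pw F N k ≤ pw F N j := by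
  induction k with
  | zero => simp_all
  | succ k ih =>
    rcases Nat.lt_or_ge j (k+1) with h' | h'
    · exact (pw_succ_le k).trans (ih (by omega))
    · have : j = k+1 := by omega
      simp [this]

lemma mul_mem_pw_succ : ∀ k (y : N), y ∈ pw F N k → ∀ t, y * t ∈ pw F N (k+1) := by
  intro k
  induction k with
  | zero => intro y _ t; simp [pw]
  | succ k ih =>
    cases k with
    | zero =>
      intro y _ t
      show y * t ∈ pw F N 2
      apply Submodule.subset_span
      exact ⟨y, t, trivial, rfl⟩
    | succ k =>
      intro y hy t
      replace hy : y ∈ Submodule.span F {z : N | ∃ x : N, ∃ w ∈ pw F N (k+1), z = x * w} := hy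
      show y * t ∈ pw F N (k+3)
      induction hy using Submodule.span_induction with
      | mem z hz =>
        obtain ⟨x, w, hw, rfl⟩ := hz
        have : (x * w) * t = x * (w * t) := mul_assoc x w t
        rw [this]
        apply Submodule.subset_span
        exact ⟨x, w * t, ih w hw t, rfl⟩
      | zero => simp
      | add a b _ _ ha hb => rw [add_mul]; exact add_mem ha hb
      | smul c a _ ha => rw [smul_mul_assoc]; exact Submodule.smul_mem _ c ha

lemma npw_mem_pw (x : N) : ∀ k, npw x k ∈ pw F N (k+1) := by
  intro k
  induction k with
  | zero => simp [npw, pw]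
  | succ k ih =>
    show x * npw x k ∈ pw F N (k+2)
    rw [mul_comm x (npw x k)]
    exact mul_mem_pw_succ (k+1) _ ih x

lemma npw_eq_zero {ν : ℕ} (hnil : pw F N (ν+1) = ⊥) {x : N} {k : ℕ} (h : ν ≤ k) :
    npw x k = 0 := by
  have := pw_le_of_le (Nat.succ_le_succ h) (npw_mem_pw (F := F) x k)
  rw [hnil] at this
  simpa using this

lemma exp1_trunc {ν m : ℕ} (hnil : pw F N (ν+1) = ⊥) (h : ν ≤ m) (x : N) :
    exp1 F m x = exp1 F ν x := by
  unfold exp1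
  rw [eq_comm]
  apply Finset.sum_subset (Finset.range_subset_range.mpr h)
  intro k hk hk'
  simp only [Finset.mem_range] at hk hk'
  rw [npw_eq_zero hnil (by omega), smul_zero]
end PW

section Pmul
open Finset
variable {F R : Type*} [Field F] [CharZero F] [CommRing R] [Algebra F R]

lemma P_mul {ν m : ℕ} (hm : 2*ν ≤ m) (x y : R)
    (hx : ∀ k, ν < k → x^k = 0) (hy : ∀ k, ν < k → y^k = 0) :
    (∑ k ∈ range (m+1), ((Nat.factorial k : F))⁻¹ • (x+y)^k)
      = (∑ k ∈ range (m+1), ((Nat.factorial k : F))⁻¹ • x^k) *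
        (∑ k ∈ range (m+1), ((Nat.factorial k : F))⁻¹ • y^k) := by
  set f : ℕ → ℕ → R := fun i j => (((Nat.factorial i : F))⁻¹ * ((Nat.factorial j : F))⁻¹) • (x^i*y^j) with hf
  have hzero : ∀ i j : ℕ, m < i + j → f i j = 0 := by
    intro i j hij
    have : ν < i ∨ ν < j := by omega
    rcases this with h | h
    · simp [hf, hx i h]
    · simp [hf, hy j h]
  have hrhs : (∑ k ∈ range (m+1), ((Nat.factorial k : F))⁻¹ • x^k) *
        (∑ k ∈ range (m+1), ((Nat.factorial k : F))⁻¹ • y^k)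
      = ∑ i ∈ range (m+1), ∑ j ∈ range (m+1), f i j := by
    rw [Finset.sum_mul_sum]
    refine Finset.sum_congr rfl fun i _ => Finset.sum_congr rfl fun j _ => ?_
    rw [smul_mul_smul_comm]
  have hlhs : (∑ k ∈ range (m+1), ((Nat.factorial k : F))⁻¹ • (x+y)^k)
      = ∑ n ∈ range (m+1), ∑ i ∈ range (n+1), f i (n - i) := by
    refine Finset.sum_congr rfl fun n _ => ?_
    rw [add_pow, Finset.smul_sum]
    refine Finset.sum_congr rfl fun i hi => ?_
    have hin : i ≤ n := by simp at hi; omega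
    have hfac : ((n.choose i : F)) * (Nat.factorial i) * (Nat.factorial (n-i)) = Nat.factorial n := by
      exact_mod_cast congrArg (Nat.cast : ℕ → F) (Nat.choose_mul_factorial_mul_factorial hin)
    have h1 : x ^ i * y ^ (n - i) * (n.choose i : R) = (n.choose i : ℕ) • (x^i * y^(n-i)) := by
      rw [nsmul_eq_mul, mul_comm]
    rw [h1, ← Nat.cast_smul_eq_nsmul F, smul_smul, hf]
    congr 1
    have f1 : (Nat.factorial i : F) ≠ 0 := Nat.cast_ne_zero.mpr (Nat.factorial_ne_zero i)
    have f2 : (Nat.factorial (n-i) : F) ≠ 0 := Nat.cast_ne_zero.mpr (Nat.factorial_ne_zero (n-i))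
    have f3 : (Nat.factorial n : F) ≠ 0 := Nat.cast_ne_zero.mpr (Nat.factorial_ne_zero n)
    field_simp
    linear_combination hfac
  rw [hlhs, hrhs]
  rw [Finset.sum_range_diag_flip (m+1) f]
  refine Finset.sum_congr rfl fun i hi => ?_
  simp only [Finset.mem_range] at hi
  apply Finset.sum_subset
  · apply Finset.range_subset_range.mpr; omega
  · intro j hj hj'
    simp only [Finset.mem_range] at hj hj'
    exact hzero i j (by omega)
end Pmul

section Uni
open Finset
variable {F N : Type*} [Field F] [CharZero F] [NonUnitalCommRing N] [Module F N]
  [SMulCommClass F N N] [IsScalarTower F N N]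

lemma inr_npw (x : N) : ∀ k, ((npw x k : N) : Unitization F N) = (x : Unitization F N)^(k+1) := by
  intro k
  induction k with
  | zero => simp [npw]
  | succ k ih =>
    show ((x * npw x k : N) : Unitization F N) = _
    rw [Unitization.inr_mul, ih]
    ring

lemma inr_pow_eq_zero {ν : ℕ} (hnil : pw F N (ν+1) = ⊥) (x : N) {k : ℕ} (h : ν < k) :
    (x : Unitization F N)^k = 0 := by
  obtain ⟨k, rfl⟩ : ∃ j, k = j + 1 := ⟨k - 1, by omega⟩
  rw [← inr_npw, npw_eq_zero hnil (by omega)]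
  simp

lemma inr_exp1 (m : ℕ) (x : N) :
    ((exp1 F m x : N) : Unitization F N) + 1
      = ∑ k ∈ range (m+1), ((Nat.factorial k : F))⁻¹ • (x : Unitization F N)^k := by
  rw [Finset.sum_range_succ' (fun k => ((Nat.factorial k : F))⁻¹ • (x : Unitization F N)^k) m]
  unfold exp1
  have : ((∑ k ∈ range m, ((Nat.factorial (k+1) : F))⁻¹ • npw x k : N) : Unitization F N)
      = ∑ k ∈ range m, ((Nat.factorial (k+1) : F))⁻¹ • ((npw x k : N) : Unitization F N) := by
    rw [show ((∑ k ∈ range m, ((Nat.factorial (k+1) : F))⁻¹ • npw x k : N) : Unitization F N)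
        = (Unitization.inrNonUnitalAlgHom F N) (∑ k ∈ range m, ((Nat.factorial (k+1) : F))⁻¹ • npw x k) from rfl,
      map_sum]
    simp only [map_smul, Unitization.inrNonUnitalAlgHom_toFun]
  rw [this]
  congr 1
  · refine Finset.sum_congr rfl fun k _ => ?_
    rw [inr_npw]
  · simp

lemma exp1_add {ν m : ℕ} (hnil : pw F N (ν+1) = ⊥) (hm : 2*ν ≤ m) (x y : N) :
    exp1 F m (x + y) = exp1 F m x + exp1 F m y + exp1 F m x * exp1 F m y := by
  apply Unitization.inr_injective (R := F)
  have key := P_mul (F := F) (R := Unitization F N) hm (x : Unitization F N) (y : Unitization F N)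
    (fun k hk => inr_pow_eq_zero hnil x hk) (fun k hk => inr_pow_eq_zero hnil y hk)
  have h1 := inr_exp1 (F := F) m (x + y)
  rw [Unitization.inr_add] at h1
  rw [key, ← inr_exp1, ← inr_exp1] at h1
  have : ((exp1 F m (x+y) : N) : Unitization F N)
      = ((exp1 F m x : N) : Unitization F N) + ((exp1 F m y : N) : Unitization F N)
        + ((exp1 F m x : N) : Unitization F N) * ((exp1 F m y : N) : Unitization F N) := by
    have := h1
    ring_nf at this ⊢
    linear_combination this
  rw [this, ← Unitization.inr_mul, ← Unitization.inr_add, ← Unitization.inr_add]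

lemma exp1_zero (m : ℕ) : exp1 F m (0 : N) = 0 := by
  unfold exp1
  have : ∀ k, npw (0 : N) k = 0 := by
    intro k; cases k <;> simp [npw]
  simp [this]
end Uni

section Surj
open Finset
variable {F N : Type*} [Field F] [CharZero F] [NonUnitalCommRing N] [Module F N]
  [SMulCommClass F N N] [IsScalarTower F N N]

lemma exp1_sub_self_mem {m j : ℕ} (hm : 1 ≤ m) {d : N} (hd : d ∈ pw F N j) :
    exp1 F m d - d ∈ pw F N (j+1) := by
  obtain ⟨m', rfl⟩ : ∃ m', m = m' + 1 := ⟨m - 1, by omega⟩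
  unfold exp1
  rw [Finset.sum_range_succ' (fun k => ((Nat.factorial (k + 1) : F))⁻¹ • npw d k) m']
  have h0 : ((Nat.factorial (0 + 1) : F))⁻¹ • npw d 0 = d := by
    simp [npw, Nat.factorial]
  rw [h0, add_sub_cancel_right]
  apply Submodule.sum_mem
  intro k _
  apply Submodule.smul_mem
  show npw d (k+1) ∈ pw F N (j+1)
  exact mul_mem_pw_succ j d hd (npw d k)

lemma exp1_mem {m j : ℕ} (hm : 1 ≤ m) {d : N} (hd : d ∈ pw F N j) :
    exp1 F m d ∈ pw F N j := by
  have h1 := exp1_sub_self_mem (F := F) hm hd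
  have h2 : exp1 F m d = d + (exp1 F m d - d) := by abel
  rw [h2]
  exact add_mem hd (pw_succ_le j h1)

lemma exp1_surjective {ν m : ℕ} (hnil : pw F N (ν+1) = ⊥) (hm : 2*ν ≤ m) (hm1 : 1 ≤ m)
    (v : N) : ∃ c : N, exp1 F m c = v := by
  have claim : ∀ i : ℕ, ∃ c : N, v - exp1 F m c ∈ pw F N (i+1) := by
    intro i
    induction i with
    | zero => exact ⟨0, by rw [exp1_zero]; simp [pw]⟩
    | succ i ih =>
      obtain ⟨c, hc⟩ := ih
      set d := v - exp1 F m c with hd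
      refine ⟨c + d, ?_⟩
      rw [exp1_add hnil hm]
      have h1 : v - (exp1 F m c + exp1 F m d + exp1 F m c * exp1 F m d)
          = -(exp1 F m d - d) - exp1 F m c * exp1 F m d := by
        rw [hd]; abel
      rw [h1]
      apply sub_mem
      · exact neg_mem (exp1_sub_self_mem hm1 hc)
      · rw [mul_comm]
        exact mul_mem_pw_succ (i+1) _ (exp1_mem hm1 hc) _
  obtain ⟨c, hc⟩ := claim ν
  rw [hnil] at hc
  exact ⟨c, by have := hc; simp only [Submodule.mem_bot, sub_eq_zero] at this; exact this.symm⟩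
end Surj

section Rad
variable {F N : Type*} [Field F] [CharZero F] [NonUnitalCommRing N] [Module F N]
  [SMulCommClass F N N] [IsScalarTower F N N]

lemma pi_fix (π : N →ₗ[F] N) (hproj : π ∘ₗ π = π) (hrange : LinearMap.range π = annSub F N)
    {a : N} (ha : a ∈ annSub F N) : π a = a := by
  rw [← hrange] at ha
  obtain ⟨b, rfl⟩ := ha
  have := congrFun (congrArg (fun f => f.toFun) hproj) b
  simpa using this

lemma rad {ν : ℕ} (hnil : pw F N (ν+1) = ⊥) (π : N →ₗ[F] N) (hproj : π ∘ₗ π = π)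
    (hrange : LinearMap.range π = annSub F N) (x : N) (h : ∀ y, π (x * y) = 0) :
    x ∈ annSub F N := by
  have claim : ∀ i : ℕ, ∀ w : N, x * w ≠ 0 → x * w ∈ pw F N (ν + 1 - i) → False := by
    intro i
    induction i with
    | zero =>
      intro w hw hmem
      simp only [Nat.sub_zero, hnil, Submodule.mem_bot] at hmem
      exact hw hmem
    | succ i ih =>
      intro w hw hmem
      by_cases hann : x * w ∈ annSub F N
      · have := pi_fix π hproj hrange hann
        rw [h w] at this
        exact hw this.symm
      · have : ∃ z, (x * w) * z ≠ 0 := by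
          by_contra hz
          push_neg at hz
          exact hann hz
        obtain ⟨z, hz⟩ := this
        have h1 : x * (w * z) ≠ 0 := by rwa [← mul_assoc]
        have h2 : x * (w * z) ∈ pw F N (ν + 1 - i) := by
          rw [← mul_assoc]
          have := mul_mem_pw_succ _ _ hmem z
          exact pw_le_of_le (by omega) this
        exact ih (w * z) h1 h2
  intro y
  by_contra hxy
  exact claim (ν + 1) y hxy (by simp [pw])
end Rad

section Lcomm
variable {F N N' : Type*} [Field F] [CharZero F]
  [NonUnitalCommRing N] [Module F N] [SMulCommClass F N N] [IsScalarTower F N N]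
  [NonUnitalCommRing N'] [Module F N'] [SMulCommClass F N' N'] [IsScalarTower F N' N']

lemma L_exp1 (L : N ≃ₗ[F] N') (hmul : ∀ x y : N, L (x * y) = L x * L y) (m : ℕ) (x : N) :
    L (exp1 F m x) = exp1 F m (L x) := by
  have hnpw : ∀ k, L (npw x k) = npw (L x) k := by
    intro k
    induction k with
    | zero => rfl
    | succ k ih => show L (x * npw x k) = L x * npw (L x) k; rw [hmul, ih]
  unfold exp1
  rw [map_sum]
  exact Finset.sum_congr rfl fun k _ => by rw [map_smul, hnpw]

lemma L_ann (L : N ≃ₗ[F] N') (hmul : ∀ x y : N, L (x * y) = L x * L y)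
    {a : N} (ha : a ∈ annSub F N) : L a ∈ annSub F N' := by
  intro y
  have : y = L (L.symm y) := (L.apply_symm_apply y).symm
  rw [this, ← hmul, ha (L.symm y), map_zero]
end Lcomm


/-- Let `N`, `Ñ` be admissible algebras with admissible projections `π`, `π̃`
and hypersurfaces `S = S_π`, `S̃ = S_{π̃}`.  If `L : N → Ñ` is an algebra isomorphism, then
there exists `c ∈ S` with `S̃ = L(S − c)`. -/
theorem stmt11 {F N N' : Type*} [Field F] [CharZero F]
    [NonUnitalCommRing N] [Module F N] [SMulCommClass F N N] [IsScalarTower F N N]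
    [FiniteDimensional F N]
    [NonUnitalCommRing N'] [Module F N'] [SMulCommClass F N' N'] [IsScalarTower F N' N']
    [FiniteDimensional F N']
    (hAnn : Module.finrank F (annSub F N) = 1)
    (hAnn' : Module.finrank F (annSub F N') = 1)
    (ν ν' : ℕ) (hnil : pw F N (ν + 1) = ⊥) (hnil' : pw F N' (ν' + 1) = ⊥)
    (π : N →ₗ[F] N) (hproj : π ∘ₗ π = π) (hrange : LinearMap.range π = annSub F N)
    (π' : N' →ₗ[F] N') (hproj' : π' ∘ₗ π' = π')
    (hrange' : LinearMap.range π' = annSub F N')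
    (L : N ≃ₗ[F] N') (hmul : ∀ x y : N, L (x * y) = L x * L y) :
    ∃ c : N, π (exp1 F ν c) = 0 ∧
      ∀ z : N', π' (exp1 F ν' z) = 0 ↔ ∃ x : N, π (exp1 F ν x) = 0 ∧ z = L (x - c) := by
  classical
  set m : ℕ := 2*ν + ν' + 1 with hm_def
  have hmν : ν ≤ m := by omega
  have hmν' : ν' ≤ m := by omega
  have hm2 : 2*ν ≤ m := by omega
  have hm1 : 1 ≤ m := by omega
  -- a₀
  have hbot : annSub F N ≠ ⊥ := by
    intro h; rw [h] at hAnn; simp at hAnn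
  obtain ⟨a₀, ha₀mem, ha₀⟩ := Submodule.exists_mem_ne_zero_of_ne_bot hbot
  have hspan : Submodule.span F {a₀} = annSub F N := by
    apply Submodule.eq_of_le_of_finrank_le
    · rw [Submodule.span_le]; simpa using ha₀mem
    · rw [hAnn, finrank_span_singleton ha₀]
  -- ℓ
  obtain ⟨g, hg⟩ : ∃ g : Module.Dual F N, g a₀ ≠ 0 := by
    by_contra h
    push_neg at h
    exact ha₀ ((Module.forall_dual_apply_eq_zero_iff F a₀).mp h)
  set ℓ : Module.Dual F N := (g a₀)⁻¹ • g with hℓdef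
  have hℓa₀ : ℓ a₀ = 1 := by
    simp [hℓdef, inv_mul_cancel₀ hg]
  have hcoord : ∀ v ∈ annSub F N, v = ℓ v • a₀ := by
    intro v hv
    rw [← hspan] at hv
    obtain ⟨t, rfl⟩ := Submodule.mem_span_singleton.mp hv
    rw [map_smul, smul_eq_mul, hℓa₀, mul_one]
  have hπ_into : ∀ x, π x ∈ annSub F N := by
    intro x; rw [← hrange]; exact LinearMap.mem_range_self π x
  have hπa₀ : π a₀ = a₀ := pi_fix π hproj hrange ha₀mem
  -- π₂
  have hmul_symm : ∀ u v : N', L.symm (u * v) = L.symm u * L.symm v := by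
    intro u v
    apply L.injective
    rw [hmul, L.apply_symm_apply, L.apply_symm_apply, L.apply_symm_apply]
  set π₂ : N →ₗ[F] N := L.symm.toLinearMap ∘ₗ π' ∘ₗ L.toLinearMap with hπ₂def
  have hπ₂apply : ∀ x, π₂ x = L.symm (π' (L x)) := fun x => rfl
  have hπ₂_into : ∀ x, π₂ x ∈ annSub F N := by
    intro x
    rw [hπ₂apply]
    have h1 : π' (L x) ∈ annSub F N' := by rw [← hrange']; exact LinearMap.mem_range_self _ _
    exact L_ann L.symm hmul_symm h1
  have hπ₂a₀ : π₂ a₀ = a₀ := by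
    rw [hπ₂apply]
    have h1 : L a₀ ∈ annSub F N' := L_ann L hmul ha₀mem
    rw [pi_fix π' hproj' hrange' h1, L.symm_apply_apply]
  -- the bilinear map T
  set T : N →ₗ[F] Module.Dual F N := ((LinearMap.mul F N).compr₂ (ℓ ∘ₗ π)).flip with hTdef
  have hT : ∀ w x : N, T w x = ℓ (π (x * w)) := fun w x => rfl
  have hkerT : LinearMap.ker T = annSub F N := by
    ext w
    simp only [LinearMap.mem_ker]
    constructor
    · intro h
      apply rad hnil π hproj hrange
      intro y
      have h1 : ℓ (π (y * w)) = 0 := by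
        have := congrFun (congrArg (fun f => f.toFun) h) y
        simpa [hT] using this
      have h2 := hcoord (π (y * w)) (hπ_into _)
      rw [h1, zero_smul] at h2
      rwa [mul_comm]
    · intro hw
      ext x
      have h0 : x * w = 0 := by rw [mul_comm]; exact hw x
      simp [hT, h0]
  set ev : Module.Dual F N →ₗ[F] F := Module.Dual.eval F N a₀ with hevdef
  have hev : ∀ χ : Module.Dual F N, ev χ = χ a₀ := fun χ => rfl
  have hrangeT : LinearMap.range T ≤ LinearMap.ker ev := by
    rintro χ ⟨w, rfl⟩
    rw [LinearMap.mem_ker, hev, hT]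
    have h0 : a₀ * w = 0 := ha₀mem w
    simp [h0]
  have hdim1 : Module.finrank F (LinearMap.range T) + 1 = Module.finrank F N := by
    have := LinearMap.finrank_range_add_finrank_ker T
    rwa [hkerT, hAnn] at this
  have hdim2 : Module.finrank F (LinearMap.ker ev) + 1 = Module.finrank F N := by
    have h1 := LinearMap.finrank_range_add_finrank_ker ev
    have hsurj : LinearMap.range ev = ⊤ := by
      rw [LinearMap.range_eq_top]
      intro t
      exact ⟨t • ℓ, by simp [hev, hℓa₀]⟩
    rw [hsurj] at h1
    have htop : Module.finrank F (⊤ : Submodule F F) = 1 := by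
      rw [finrank_top, Module.finrank_self]
    have h2 : Module.finrank F (Module.Dual F N) = Module.finrank F N :=
      Subspace.dual_finrank_eq
    omega
  have hrangeT_eq : LinearMap.range T = LinearMap.ker ev :=
    Submodule.eq_of_le_of_finrank_le hrangeT (by omega)
  -- obtain w₀
  have hχmem : ℓ ∘ₗ (π - π₂) ∈ LinearMap.ker ev := by
    rw [LinearMap.mem_ker, hev]
    simp [hπa₀, hπ₂a₀]
  rw [← hrangeT_eq] at hχmem
  obtain ⟨w₀, hw₀⟩ := hχmem
  have hw₀' : ∀ x, π (x * w₀) = π x - π₂ x := by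
    intro x
    have h1 : ℓ (π (x * w₀)) = ℓ (π x - π₂ x) := by
      have := congrFun (congrArg (fun f => f.toFun) hw₀) x
      simpa [hT] using this
    have h2 := hcoord (π (x * w₀)) (hπ_into _)
    have h3 := hcoord (π x - π₂ x) (sub_mem (hπ_into x) (hπ₂_into x))
    rw [h2, h3, h1]
  -- normalize w
  set w : N := w₀ - π w₀ with hwdef
  have hππ : ∀ x, π (π x) = π x := by
    intro x
    have := congrFun (congrArg (fun f => f.toFun) hproj) x
    simpa using this
  have hπw : π w = 0 := by rw [hwdef, map_sub, hππ, sub_self]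
  have hw : ∀ x, π (x * w) = π x - π₂ x := by
    intro x
    have h0 : x * π w₀ = 0 := by
      rw [mul_comm]; exact hπ_into w₀ x
    rw [hwdef, mul_sub, map_sub, h0, map_zero, sub_zero, hw₀']
  -- c
  obtain ⟨c, hc⟩ := exp1_surjective hnil hm2 hm1 (-w)
  have hπc : π (exp1 F ν c) = 0 := by
    rw [← exp1_trunc hnil hmν, hc, map_neg, hπw, neg_zero]
  -- key identity
  have KEY : ∀ y : N, π (exp1 F m (y + c)) = π₂ (exp1 F m y) := by
    intro y
    rw [exp1_add hnil hm2, hc, map_add, map_add, map_neg, hπw, neg_zero, add_zero,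
      mul_neg, map_neg, hw]
    abel
  -- L side
  have hLz : ∀ z : N', π₂ (exp1 F m (L.symm z)) = L.symm (π' (exp1 F ν' z)) := by
    intro z
    rw [hπ₂apply, L_exp1 L hmul, L.apply_symm_apply, exp1_trunc hnil' hmν']
  refine ⟨c, hπc, fun z => ⟨fun h => ?_, fun ⟨x, hx, hz⟩ => ?_⟩⟩
  · refine ⟨L.symm z + c, ?_, ?_⟩
    · rw [← exp1_trunc hnil hmν, KEY, hLz, h, map_zero]
    · rw [add_sub_cancel_right, L.apply_symm_apply]
  · have h1 : L.symm z = x - c := by rw [hz, L.symm_apply_apply]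
    have h2 : π₂ (exp1 F m (L.symm z)) = 0 := by
      rw [h1, ← KEY, sub_add_cancel, exp1_trunc hnil hmν, hx]
    rw [hLz] at h2
    have := congrArg L h2
    rwa [L.apply_symm_apply, map_zero] at this
end
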